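/- For a Fitch map ε, the triple set R(ε) = ⋃_{N ∈ N[ε]} { ab|c : a,b ∈ N, c ∈ X∖N } is closed under triple closure, i.e., the closure of R(ε) (the set of triples displayed by every tree displaying R(ε)) equals R(ε) itself. -/

import Mathlib

/-- A finite rooted phylogenetic tree on leaf set `X`, with vertex type `V`.
Vertices are encoded via a parent function; `par root = root`. -/
structure PhyloTree (V X : Type) : Type where
  fin : Finite V
  root : V
  par : V → V
  par_root : par root = root
  reach : ∀ v : V, ∃ n : ℕ, par^[n] v = root
  leaf : X → V
  leaf_inj : Function.Injective leaf
  leaf_isLeaf : ∀ (x : X) (u : V), par u = leaf x → u = leaf x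
  leaf_only : ∀ v : V, (∀ u : V, par u = v → u = v) → ∃ x : X, leaf x = v
  root_deg : (∃ x : X, leaf x = root) ∨ 2 ≤ {u : V | par u = root ∧ u ≠ root}.ncard
  inner_deg : ∀ v : V, v ≠ root → (¬ ∃ x : X, leaf x = v) →
      2 ≤ {u : V | par u = v ∧ u ≠ v}.ncard

namespace PhyloTree

variable {V X : Type}

/-- `T.anc u v` : `u` is an ancestor of `v`, i.e. `u ⪯_T v`. -/
def anc (T : PhyloTree V X) (u v : V) : Prop := ∃ n : ℕ, T.par^[n] v = u

/-- `l` is the last common ancestor of `a` and `b`. -/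
def IsLca (T : PhyloTree V X) (l a b : V) : Prop :=
  T.anc l a ∧ T.anc l b ∧ ∀ u : V, T.anc u a → T.anc u b → T.anc u l

/-- The cluster of `v`: the set of leaves below `v`. -/
def cluster (T : PhyloTree V X) (v : V) : Set X := {x : X | T.anc v (T.leaf x)}

/-- The cluster set `C(T)`. -/
def clusterSet (T : PhyloTree V X) : Set (Set X) := {S : Set X | ∃ v : V, S = T.cluster v}

/-- The edge `(par u, u)` lies on the descending path from `a` down to `b`. -/
def edgeOnDown (T : PhyloTree V X) (a b u : V) : Prop :=
  T.anc a u ∧ u ≠ a ∧ T.anc u b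

/-- The edge `(par u, u)` lies on the unique path between `v` and `w`. -/
def edgeOnPath (T : PhyloTree V X) (v w u : V) : Prop :=
  ∃ l : V, T.IsLca l v w ∧ (T.edgeOnDown l v u ∨ T.edgeOnDown l w u)

/-- `T` displays the rooted triple `ab|c`. -/
def Displays (T : PhyloTree V X) (a b c : X) : Prop :=
  ∃ l3 l2 : V, T.IsLca l2 (T.leaf a) (T.leaf b) ∧
    T.IsLca l3 l2 (T.leaf c) ∧ l3 ≠ l2

end PhyloTree

/-- `(T, lab)` explains `ε` : for distinct leaves `x,y`, `m ∈ ε x y` iff there is an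
`m`-edge on the path from `lca(x,y)` down to `y`. -/
def Explains {V X M : Type} (T : PhyloTree V X) (lab : V → Set M)
    (ε : X → X → Set M) : Prop :=
  ∀ x y : X, x ≠ y → ∀ m : M,
    (m ∈ ε x y ↔ ∃ l : V, T.IsLca l (T.leaf x) (T.leaf y) ∧
      ∃ u : V, T.edgeOnDown l (T.leaf y) u ∧ m ∈ lab u)

/-- `ε` is a Fitch map: it is explained by some edge-labeled phylogenetic tree. -/
def IsFitchMap {X M : Type} (ε : X → X → Set M) : Prop :=
  ∃ (V : Type) (T : PhyloTree V X) (lab : V → Set M), Explains T lab ε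

/-- The complementary neighborhood `N_{¬m}[y]`. -/
def Nbr {X M : Type} (ε : X → X → Set M) (m : M) (y : X) : Set X :=
  {x : X | x ≠ y ∧ m ∉ ε x y} ∪ {y}

/-- The collection `N[ε]` of all complementary neighborhoods. -/
def NbrSet {X M : Type} (ε : X → X → Set M) : Set (Set X) :=
  {N : Set X | ∃ (m : M) (y : X), N = Nbr ε m y}

/-- A set system is hierarchy-like if any two members intersect in `∅` or one of them. -/
def HLike {X : Type} (H : Set (Set X)) : Prop :=
  ∀ P ∈ H, ∀ Q ∈ H, P ∩ Q = P ∨ P ∩ Q = Q ∨ P ∩ Q = ∅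

/-- The inequality condition (IC). -/
def IneqCond {X M : Type} (ε : X → X → Set M) : Prop :=
  ∀ (m : M) (y y' : X), y' ∈ Nbr ε m y → (Nbr ε m y').ncard ≤ (Nbr ε m y).ncard


/-- The triple relation `R(ε)`: `ab|c ∈ R(ε)`. -/
def TripleRel {X M : Type} (ε : X → X → Set M) (a b c : X) : Prop :=
  a ≠ b ∧ ∃ N ∈ NbrSet ε, a ∈ N ∧ b ∈ N ∧ c ∉ N


namespace PhyloTree

variable {V X : Type} (T : PhyloTree V X)

-- general lemmas
variable (T : PhyloTree V X)

lemma anc_refl (v : V) : T.anc v v := ⟨0, rfl⟩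

lemma anc_trans {u v w : V} (h1 : T.anc u v) (h2 : T.anc v w) : T.anc u w := by
  obtain ⟨n, hn⟩ := h1; obtain ⟨m, hm⟩ := h2
  exact ⟨n + m, by rw [Function.iterate_add_apply, hm, hn]⟩

lemma par_iterate_root (n : ℕ) : T.par^[n] T.root = T.root := by
  induction n with
  | zero => rfl
  | succ k ih => rw [Function.iterate_succ_apply', ih, T.par_root]

lemma anc_root (v : V) : T.anc T.root v := by
  obtain ⟨n, hn⟩ := T.reach v; exact ⟨n, hn⟩

lemma eq_root_of_periodic {w : V} {p : ℕ} (hper : T.par^[p] w = w) (hp : 0 < p) :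
    w = T.root := by
  have hper' : ∀ k : ℕ, T.par^[k * p] w = w := by
    intro k
    induction k with
    | zero => simp
    | succ j ih => rw [Nat.succ_mul, Function.iterate_add_apply, hper, ih]
  obtain ⟨r, hr⟩ := T.reach w
  have := hper' (r + 1)
  have hle : r ≤ (r + 1) * p := by nlinarith
  obtain ⟨d, hd⟩ := Nat.exists_eq_add_of_le hle
  rw [hd, Nat.add_comm, Function.iterate_add_apply, hr] at this
  rw [← this, par_iterate_root]

lemma anc_antisymm {u v : V} (h1 : T.anc u v) (h2 : T.anc v u) : u = v := by
  obtain ⟨n, hn⟩ := h1; obtain ⟨m, hm⟩ := h2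
  rcases Nat.eq_zero_or_pos (n + m) with h | h
  · obtain ⟨hn0, hm0⟩ := Nat.add_eq_zero.mp h
    subst hn0; exact hn.symm ▸ rfl
  · have hper : T.par^[n + m] u = u := by
      rw [Function.iterate_add_apply, hm, hn]
    have hu : u = T.root := T.eq_root_of_periodic hper h
    have hv : v = T.root := by rw [hu] at hm; rw [← hm, par_iterate_root]
    rw [hu, hv]

lemma anc_total_of_common {u w v : V} (h1 : T.anc u v) (h2 : T.anc w v) :
    T.anc u w ∨ T.anc w u := by
  obtain ⟨n, hn⟩ := h1; obtain ⟨m, hm⟩ := h2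
  rcases Nat.le_total n m with h | h
  · right
    obtain ⟨d, hd⟩ := Nat.exists_eq_add_of_le h
    exact ⟨d, by rw [← hm, hd, Nat.add_comm, Function.iterate_add_apply, hn]⟩
  · left
    obtain ⟨d, hd⟩ := Nat.exists_eq_add_of_le h
    exact ⟨d, by rw [← hn, hd, Nat.add_comm, Function.iterate_add_apply, hm]⟩

lemma exists_lca (a b : V) : ∃ l : V, T.IsLca l a b := by
  classical
  have hex : ∃ n : ℕ, T.anc (T.par^[n] b) a := by
    obtain ⟨n, hn⟩ := T.reach b
    exact ⟨n, hn ▸ T.anc_root a⟩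
  set n₀ := Nat.find hex with hn₀
  refine ⟨T.par^[n₀] b, Nat.find_spec hex, ⟨n₀, rfl⟩, ?_⟩
  intro u hua hub
  obtain ⟨j, hj⟩ := hub
  rcases Nat.lt_or_ge j n₀ with h | h
  · exact absurd (hj ▸ hua) (Nat.find_min hex h)
  · obtain ⟨d, hd⟩ := Nat.exists_eq_add_of_le h
    exact ⟨d, by rw [← hj, hd, Nat.add_comm, Function.iterate_add_apply]⟩

lemma lca_unique {l l' a b : V} (h : T.IsLca l a b) (h' : T.IsLca l' a b) : l = l' :=
  T.anc_antisymm (h'.2.2 l h.1 h.2.1) (h.2.2 l' h'.1 h'.2.1)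

lemma cluster_mono {u v : V} (h : T.anc u v) : T.cluster v ⊆ T.cluster u :=
  fun _ hx => T.anc_trans h hx

lemma lca_self_right {l a : V} (h : T.anc l a) : T.IsLca l a l :=
  ⟨h, T.anc_refl l, fun _ _ h2 => h2⟩

/-- A triple is displayed iff some cluster separates it. -/
lemma displays_iff_cluster (a b c : X) :
    T.Displays a b c ↔ ∃ v : V, a ∈ T.cluster v ∧ b ∈ T.cluster v ∧ c ∉ T.cluster v := by
  constructor
  · rintro ⟨l3, l2, h2, h3, hne⟩
    refine ⟨l2, h2.1, h2.2.1, fun hc => hne ?_⟩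
    have : T.IsLca l2 l2 (T.leaf c) := ⟨T.anc_refl l2, hc, fun _ h' _ => h'⟩
    exact T.lca_unique h3 this
  · rintro ⟨v, ha, hb, hc⟩
    obtain ⟨l2, hl2⟩ := T.exists_lca (T.leaf a) (T.leaf b)
    obtain ⟨l3, hl3⟩ := T.exists_lca l2 (T.leaf c)
    refine ⟨l3, l2, hl2, hl3, fun heq => hc ?_⟩
    have hvl2 : T.anc v l2 := hl2.2.2 v ha hb
    exact T.anc_trans hvl2 (heq ▸ hl3.2.1)

lemma iterate_eq_leaf {x : X} : ∀ (n : ℕ) (w : V), T.par^[n] w = T.leaf x → w = T.leaf x := by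
  intro n
  induction n with
  | zero => intro w h; exact h
  | succ k ih =>
    intro w h
    rw [Function.iterate_succ_apply] at h
    have := ih (T.par w) h
    exact T.leaf_isLeaf x w this

lemma cluster_leaf (x : X) : T.cluster (T.leaf x) = {x} := by
  ext z
  simp only [cluster, Set.mem_setOf_eq, Set.mem_singleton_iff]
  constructor
  · rintro ⟨n, hn⟩
    exact T.leaf_inj (T.iterate_eq_leaf n _ hn)
  · rintro rfl
    exact T.anc_refl _

lemma cluster_root : T.cluster T.root = Set.univ :=
  Set.eq_univ_of_forall fun x => T.anc_root _

end PhyloTree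

/-- Every complementary neighborhood is a cluster of the explaining tree. -/
lemma nbr_eq_cluster {V X M : Type} (T : PhyloTree V X) (lab : V → Set M)
    (ε : X → X → Set M) (hE : Explains T lab ε) (m : M) (y : X) :
    ∃ v : V, Nbr ε m y = T.cluster v := by
  classical
  have hB : ∃ j : ℕ, m ∈ lab (T.par^[j] (T.leaf y)) ∨ T.par^[j] (T.leaf y) = T.root := by
    obtain ⟨d, hd⟩ := T.reach (T.leaf y)
    exact ⟨d, Or.inr hd⟩
  set k := Nat.find hB with hk
  set v := T.par^[k] (T.leaf y) with hv
  have hvy : T.anc v (T.leaf y) := ⟨k, rfl⟩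
  refine ⟨v, Set.ext fun x => ?_⟩
  constructor
  · -- Nbr ⊆ cluster
    rintro (⟨hxy, hmx⟩ | hx)
    · obtain ⟨l, hl⟩ := T.exists_lca (T.leaf x) (T.leaf y)
      obtain ⟨n, hn⟩ := hl.2.1
      rcases le_or_gt n k with hle | hgt
      · -- v is above l : anc v l
        have hvl : T.anc v l := ⟨k - n, by
          rw [← hn, ← Function.iterate_add_apply, Nat.sub_add_cancel hle, ← hv]⟩
        exact T.anc_trans hvl hl.1
      · rcases Nat.find_spec hB with hml | hroot
        · -- m ∈ lab v: derive contradiction with m ∉ ε x y, unless v = l (then v = root)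
          by_cases hveq : v = l
          · -- par^[n-k] v = l = v with n - k > 0, so v = root
            have hper : T.par^[n - k] v = v := by
              rw [hv, ← Function.iterate_add_apply, Nat.sub_add_cancel (le_of_lt hgt), hn, ← hveq]
            have := T.eq_root_of_periodic hper (Nat.sub_pos_of_lt hgt)
            rw [this]
            exact T.anc_root _
          · exfalso
            apply hmx
            rw [hE x y hxy m]
            refine ⟨l, hl, v, ⟨⟨n - k, by
              rw [hv, ← Function.iterate_add_apply, Nat.sub_add_cancel (le_of_lt hgt), hn]⟩,
              hveq, hvy⟩, hml⟩
        · have hvr : v = T.root := by rw [hv, hk]; exact hroot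
          rw [hvr]
          exact T.anc_root _
    · simp only [Set.mem_singleton_iff] at hx
      subst hx
      exact hvy
  · -- cluster ⊆ Nbr
    intro hx
    by_cases hxy : x = y
    · exact Or.inr hxy
    · refine Or.inl ⟨hxy, fun hm => ?_⟩
      rw [hE x y hxy m] at hm
      obtain ⟨l, hl, u, ⟨hlu, hune, huy⟩, hml⟩ := hm
      obtain ⟨j, hj⟩ := huy
      have hjk : k ≤ j := Nat.find_le (Or.inl (hj.symm ▸ hml))
      have huv : T.anc u v := ⟨j - k, by
        rw [hv, ← Function.iterate_add_apply, Nat.sub_add_cancel hjk, hj]⟩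
      have hux : T.anc u (T.leaf x) := T.anc_trans huv hx
      have hul : T.anc u l := hl.2.2 u hux ⟨j, hj⟩
      exact hune (T.anc_antisymm hul hlu)


lemma cluster_comparable {V X : Type} (T : PhyloTree V X) (u v : V)
    (h : (T.cluster u ∩ T.cluster v).Nonempty) :
    T.cluster u ⊆ T.cluster v ∨ T.cluster v ⊆ T.cluster u := by
  obtain ⟨x, hxu, hxv⟩ := h
  rcases T.anc_total_of_common hxu hxv with h | h
  · exact Or.inr (T.cluster_mono h)
  · exact Or.inl (T.cluster_mono h)

section Construction

variable {X : Type} [Fintype X] {H : Set (Set X)}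

/-- Hypotheses on the hierarchy we build a tree from. -/
structure GoodH (H : Set (Set X)) : Prop where
  nonem : ∀ S ∈ H, S.Nonempty
  univ_mem : Set.univ ∈ H
  sing_mem : ∀ x : X, ({x} : Set X) ∈ H
  cmp : ∀ S ∈ H, ∀ S' ∈ H, (S ∩ S').Nonempty → S ⊆ S' ∨ S' ⊆ S

lemma exists_min_strict_sup (hG : GoodH H) {S : Set X} (hS : S ∈ H) (hne : S ≠ Set.univ) :
    ∃ P, (P ∈ H ∧ S ⊂ P) ∧ ∀ Q ∈ H, S ⊂ Q → P ⊆ Q := by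
  classical
  set C : Set (Set X) := {P | P ∈ H ∧ S ⊂ P} with hC
  have hCne : C.Nonempty := ⟨Set.univ, hG.univ_mem, (Set.subset_univ S).ssubset_of_ne hne⟩
  obtain ⟨P, hPC, hPmin⟩ := Set.Finite.exists_minimalFor id C (Set.toFinite C) hCne
  refine ⟨P, hPC, fun Q hQ hSQ => ?_⟩
  have hPQ : (P ∩ Q).Nonempty := by
    obtain ⟨x, hx⟩ := hG.nonem S hS
    exact ⟨x, hPC.2.1 hx, hSQ.1 hx⟩
  rcases hG.cmp P hPC.1 Q hQ hPQ with h | h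
  · exact h
  · exact hPmin ⟨hQ, hSQ⟩ h

variable (hG : GoodH H)

open Classical in
noncomputable def hpar (hG : GoodH H) : {S : Set X // S ∈ H} → {S : Set X // S ∈ H} :=
  fun S =>
    if h : S.1 = Set.univ then S
    else ⟨(exists_min_strict_sup hG S.2 h).choose, (exists_min_strict_sup hG S.2 h).choose_spec.1.1⟩

lemma hpar_univ (S : {S : Set X // S ∈ H}) (h : S.1 = Set.univ) : hpar hG S = S := by
  rw [hpar, dif_pos h]

lemma hpar_ssub (S : {S : Set X // S ∈ H}) (h : S.1 ≠ Set.univ) : S.1 ⊂ (hpar hG S).1 := by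
  rw [hpar, dif_neg h]
  exact (exists_min_strict_sup hG S.2 h).choose_spec.1.2

lemma hpar_min (S : {S : Set X // S ∈ H}) (h : S.1 ≠ Set.univ)
    {Q : Set X} (hQ : Q ∈ H) (hSQ : S.1 ⊂ Q) : (hpar hG S).1 ⊆ Q := by
  rw [hpar, dif_neg h]
  exact (exists_min_strict_sup hG S.2 h).choose_spec.2 Q hQ hSQ

lemma hpar_sub (S : {S : Set X // S ∈ H}) : S.1 ⊆ (hpar hG S).1 := by
  by_cases h : S.1 = Set.univ
  · rw [hpar_univ hG S h]
  · exact (hpar_ssub hG S h).1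

lemma hpar_iter_sub (S : {S : Set X // S ∈ H}) (n : ℕ) : S.1 ⊆ ((hpar hG)^[n] S).1 := by
  induction n with
  | zero => exact subset_rfl
  | succ k ih =>
    rw [Function.iterate_succ_apply']
    exact ih.trans (hpar_sub hG _)

lemma hpar_reach_aux (k : ℕ) : ∀ S : {S : Set X // S ∈ H},
    (Set.univ \ S.1).ncard ≤ k → ∃ n, (hpar hG)^[n] S = ⟨Set.univ, hG.univ_mem⟩ := by
  induction k with
  | zero =>
    intro S hS
    have h0 : (Set.univ \ S.1).ncard = 0 := Nat.le_zero.mp hS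
    have : Set.univ \ S.1 = ∅ := by
      rwa [Set.ncard_eq_zero (Set.toFinite _)] at h0
    have hSu : S.1 = Set.univ :=
      Set.eq_univ_of_univ_subset (fun x _ => by
        by_contra hx
        exact absurd (Set.mem_diff x |>.mpr ⟨Set.mem_univ x, hx⟩) (this ▸ Set.notMem_empty x))
    exact ⟨0, Subtype.ext hSu⟩
  | succ k ih =>
    intro S hS
    by_cases h : S.1 = Set.univ
    · exact ⟨0, Subtype.ext h⟩
    · have hss := hpar_ssub hG S h
      have hlt : (Set.univ \ (hpar hG S).1).ncard < (Set.univ \ S.1).ncard := by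
        apply Set.ncard_lt_ncard _ (Set.toFinite _)
        constructor
        · exact Set.diff_subset_diff_right hss.1
        · intro hsub
          obtain ⟨x, hxP, hxS⟩ := Set.exists_of_ssubset hss
          exact (hsub ⟨Set.mem_univ x, hxS⟩).2 hxP
      obtain ⟨n, hn⟩ := ih (hpar hG S) (by omega)
      exact ⟨n + 1, by rw [Function.iterate_add_apply, Function.iterate_one]; exact hn⟩

lemma hpar_reach (S : {S : Set X // S ∈ H}) :
    ∃ n, (hpar hG)^[n] S = ⟨Set.univ, hG.univ_mem⟩ :=
  hpar_reach_aux hG (Set.univ \ S.1).ncard S le_rfl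

/-- anc upward: if v.1 ⊆ u.1 then u is reached by iterating hpar from v. -/
lemma hpar_climb_aux (k : ℕ) : ∀ v u : {S : Set X // S ∈ H},
    v.1 ⊆ u.1 → (u.1 \ v.1).ncard ≤ k → ∃ n, (hpar hG)^[n] v = u := by
  induction k with
  | zero =>
    intro v u hsub hS
    have h0 : (u.1 \ v.1) = ∅ := by
      rw [Nat.le_zero, Set.ncard_eq_zero (Set.toFinite _)] at hS
      exact hS
    have : u.1 = v.1 := Set.Subset.antisymm (fun x hx => by
      by_contra hxv
      exact absurd (Set.mem_diff x |>.mpr ⟨hx, hxv⟩) (h0 ▸ Set.notMem_empty x)) hsub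
    exact ⟨0, Subtype.ext this.symm⟩
  | succ k ih =>
    intro v u hsub hS
    by_cases heq : v.1 = u.1
    · exact ⟨0, Subtype.ext heq⟩
    · have hss : v.1 ⊂ u.1 := hsub.ssubset_of_ne heq
      have hvnu : v.1 ≠ Set.univ := fun h => heq (h.trans (Set.eq_univ_of_univ_subset (h ▸ hsub)).symm)
      have hpsub : (hpar hG v).1 ⊆ u.1 := hpar_min hG v hvnu u.2 hss
      have hss2 : v.1 ⊂ (hpar hG v).1 := hpar_ssub hG v hvnu
      have hlt : (u.1 \ (hpar hG v).1).ncard < (u.1 \ v.1).ncard := by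
        apply Set.ncard_lt_ncard _ (Set.toFinite _)
        constructor
        · exact Set.diff_subset_diff_right hss2.1
        · intro hsub2
          obtain ⟨x, hxP, hxS⟩ := Set.exists_of_ssubset hss2
          exact (hsub2 ⟨hpsub hxP, hxS⟩).2 hxP
      obtain ⟨n, hn⟩ := ih (hpar hG v) u hpsub (by omega)
      exact ⟨n + 1, by rw [Function.iterate_add_apply, Function.iterate_one]; exact hn⟩

lemma hpar_climb {v u : {S : Set X // S ∈ H}} (hsub : v.1 ⊆ u.1) :
    ∃ n, (hpar hG)^[n] v = u :=
  hpar_climb_aux hG (u.1 \ v.1).ncard v u hsub le_rfl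

lemma exists_child (hG : GoodH H) (v : {S : Set X // S ∈ H}) {x : X}
    (hx : x ∈ v.1) (hv : v.1 ≠ ({x} : Set X)) :
    ∃ u : {S : Set X // S ∈ H}, hpar hG u = v ∧ x ∈ u.1 ∧ u.1 ⊂ v.1 := by
  classical
  set C : Set (Set X) := {P | P ∈ H ∧ x ∈ P ∧ P ⊂ v.1} with hC
  have hCne : C.Nonempty := by
    refine ⟨{x}, hG.sing_mem x, rfl, ?_⟩
    exact (Set.singleton_subset_iff.mpr hx).ssubset_of_ne (fun h => hv h.symm)
  obtain ⟨P, hPC, hPmax⟩ := Set.Finite.exists_maximalFor id C (Set.toFinite C) hCne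
  set u : {S : Set X // S ∈ H} := ⟨P, hPC.1⟩ with hu
  have hPnu : P ≠ Set.univ := by
    intro h
    have h2 := hPC.2.2
    rw [h] at h2
    exact h2.2 (Set.subset_univ _)
  have hsub : (hpar hG u).1 ⊆ v.1 := hpar_min hG u hPnu v.2 hPC.2.2
  have hss : P ⊂ (hpar hG u).1 := hpar_ssub hG u hPnu
  have heq : (hpar hG u).1 = v.1 := by
    by_contra hne
    have hss2 : (hpar hG u).1 ⊂ v.1 := hsub.ssubset_of_ne hne
    have : (hpar hG u).1 ∈ C := ⟨(hpar hG u).2, hss.1 hPC.2.1, hss2⟩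
    have heq' : P = (hpar hG u).1 := Set.Subset.antisymm hss.1 (hPmax this hss.1)
    exact hss.2 (by rw [heq'])
  exact ⟨u, Subtype.ext heq, hPC.2.1, hPC.2.2⟩

lemma two_children (hG : GoodH H) (v : {S : Set X // S ∈ H}) {x y : X}
    (hx : x ∈ v.1) (hy : y ∈ v.1) (hxy : x ≠ y) :
    2 ≤ {u : {S : Set X // S ∈ H} | hpar hG u = v ∧ u ≠ v}.ncard := by
  have hvx : v.1 ≠ ({x} : Set X) := by
    intro h
    exact hxy ((h ▸ hy : y ∈ ({x} : Set X))).symm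
  obtain ⟨u₁, hp₁, hx₁, hss₁⟩ := exists_child hG v hx hvx
  obtain ⟨z, hzv, hzu⟩ := Set.exists_of_ssubset hss₁
  have hvz : v.1 ≠ ({z} : Set X) := by
    intro h
    have : x ∈ ({z} : Set X) := h ▸ hx
    simp only [Set.mem_singleton_iff] at this
    exact hzu (this ▸ hx₁)
  obtain ⟨u₂, hp₂, hz₂, hss₂⟩ := exists_child hG v hzv hvz
  have hne : u₁ ≠ u₂ := fun h => hzu (h ▸ hz₂)
  rw [show (2 : ℕ) = 1 + 1 by rfl]
  refine Set.one_lt_ncard (Set.toFinite _) |>.mpr ?_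
  exact ⟨u₁, ⟨hp₁, fun h => hss₁.2 ((congrArg Subtype.val h) ▸ subset_rfl)⟩,
    u₂, ⟨hp₂, fun h => hss₂.2 ((congrArg Subtype.val h) ▸ subset_rfl)⟩, hne⟩

/-- The tree built from a good hierarchy. -/
noncomputable def hierTree (hG : GoodH H) [Nonempty X] : PhyloTree {S : Set X // S ∈ H} X where
  fin := by infer_instance
  root := ⟨Set.univ, hG.univ_mem⟩
  par := hpar hG
  par_root := hpar_univ hG _ rfl
  reach := hpar_reach hG
  leaf := fun x => ⟨{x}, hG.sing_mem x⟩
  leaf_inj := fun x y h => by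
    have : ({x} : Set X) = {y} := congrArg Subtype.val h
    exact Set.singleton_eq_singleton_iff.mp this
  leaf_isLeaf := by
    intro x u h
    have hsub : u.1 ⊆ ({x} : Set X) := by
      have := hpar_sub hG u
      rw [h] at this
      exact this
    obtain ⟨z, hz⟩ := hG.nonem u.1 u.2
    have hzx : z = x := hsub hz
    apply Subtype.ext
    apply Set.Subset.antisymm hsub
    rw [Set.singleton_subset_iff]
    exact hzx ▸ hz
  leaf_only := by
    intro v hv
    obtain ⟨x, hx⟩ := hG.nonem v.1 v.2
    by_cases h : v.1 = ({x} : Set X)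
    · exact ⟨x, Subtype.ext h.symm⟩
    · obtain ⟨u, hpu, _, hss⟩ := exists_child hG v hx h
      have h2 := hv u hpu
      rw [h2] at hss
      exact absurd hss (ssubset_irrefl _)
  root_deg := by
    by_cases h : ∃ x : X, Set.univ = ({x} : Set X)
    · obtain ⟨x, hx⟩ := h
      exact Or.inl ⟨x, Subtype.ext hx.symm⟩
    · right
      push_neg at h
      obtain ⟨x⟩ := ‹Nonempty X›
      have : ∃ y : X, y ≠ x := by
        by_contra hy
        push_neg at hy
        exact h x (Set.eq_singleton_iff_unique_mem.mpr ⟨trivial, fun z _ => hy z⟩)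
      obtain ⟨y, hy⟩ := this
      exact two_children hG _ (Set.mem_univ y) (Set.mem_univ x) hy
  inner_deg := by
    intro v hvr hvl
    obtain ⟨x, hx⟩ := hG.nonem v.1 v.2
    have : ∃ y ∈ v.1, y ≠ x := by
      by_contra hy
      push_neg at hy
      exact hvl ⟨x, Subtype.ext (Set.eq_singleton_iff_unique_mem.mpr ⟨hx, hy⟩).symm⟩
    obtain ⟨y, hyv, hyx⟩ := this
    exact two_children hG v hyv hx hyx

lemma hierTree_anc (hG : GoodH H) [Nonempty X] (u v : {S : Set X // S ∈ H}) :
    (hierTree hG).anc u v ↔ v.1 ⊆ u.1 := by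
  constructor
  · rintro ⟨n, rfl⟩
    exact hpar_iter_sub hG v n
  · intro h
    exact hpar_climb hG h

lemma hierTree_cluster (hG : GoodH H) [Nonempty X] (v : {S : Set X // S ∈ H}) :
    (hierTree hG).cluster v = v.1 := by
  ext x
  simp only [PhyloTree.cluster, Set.mem_setOf_eq, hierTree_anc]
  constructor
  · intro h
    exact h rfl
  · intro h
    exact Set.singleton_subset_iff.mpr h

lemma hierTree_displays (hG : GoodH H) [Nonempty X] (a b c : X) :
    (hierTree hG).Displays a b c ↔ ∃ S ∈ H, a ∈ S ∧ b ∈ S ∧ c ∉ S := by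
  rw [PhyloTree.displays_iff_cluster]
  constructor
  · rintro ⟨v, ha, hb, hc⟩
    rw [hierTree_cluster] at ha hb hc
    exact ⟨v.1, v.2, ha, hb, hc⟩
  · rintro ⟨S, hS, ha, hb, hc⟩
    refine ⟨⟨S, hS⟩, ?_, ?_, ?_⟩ <;> rw [hierTree_cluster] <;> assumption

end Construction


/-- for a Fitch map `ε`, the triple set `R(ε)` is closed: a triple `ab|c`
(on pairwise distinct leaves) is displayed by every tree displaying `R(ε)` iff it lies
in `R(ε)`. -/
theorem triple_set_closed {X M : Type} [Fintype X] [Fintype M] [Nonempty X] [Nonempty M]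
    (ε : X → X → Set M) (h : IsFitchMap ε) :
    ∀ a b c : X, a ≠ b → a ≠ c → b ≠ c →
      ((∀ (V : Type) (T : PhyloTree V X),
          (∀ a' b' c' : X, TripleRel ε a' b' c' → T.Displays a' b' c') →
          T.Displays a b c)
        ↔ TripleRel ε a b c) := by
  classical
  obtain ⟨V, T, lab, hE⟩ := h
  intro a b c hab hac hbc
  constructor
  · intro hyp
    set H : Set (Set X) := (NbrSet ε ∪ {S | ∃ x : X, S = {x}}) ∪ {Set.univ} with hH
    have hmemcl : ∀ S ∈ H, ∃ v : V, S = T.cluster v := by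
      intro S hS
      rcases hS with (hS | hS) | hS
      · obtain ⟨m, y, rfl⟩ := hS
        obtain ⟨v, hv⟩ := nbr_eq_cluster T lab ε hE m y
        exact ⟨v, hv⟩
      · obtain ⟨x, rfl⟩ := hS
        exact ⟨T.leaf x, (T.cluster_leaf x).symm⟩
      · rw [Set.mem_singleton_iff] at hS
        subst hS
        exact ⟨T.root, T.cluster_root.symm⟩
    have hG : GoodH H := by
      refine ⟨?_, Or.inr rfl, fun x => Or.inl (Or.inr ⟨x, rfl⟩), ?_⟩
      · intro S hS
        rcases hS with (hS | hS) | hS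
        · obtain ⟨m, y, rfl⟩ := hS
          exact ⟨y, Or.inr rfl⟩
        · obtain ⟨x, rfl⟩ := hS
          exact ⟨x, rfl⟩
        · rw [Set.mem_singleton_iff] at hS
          subst hS
          exact Set.univ_nonempty
      · intro S hS S' hS' hint
        obtain ⟨v, rfl⟩ := hmemcl S hS
        obtain ⟨v', rfl⟩ := hmemcl S' hS'
        exact cluster_comparable T v v' hint
    have hfeed : ∀ a' b' c' : X, TripleRel ε a' b' c' → (hierTree hG).Displays a' b' c' := by
      rintro a' b' c' ⟨_, N, hN, hNa, hNb, hNc⟩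
      rw [hierTree_displays]
      exact ⟨N, Or.inl (Or.inl hN), hNa, hNb, hNc⟩
    have hdisp := hyp _ (hierTree hG) hfeed
    rw [hierTree_displays] at hdisp
    obtain ⟨S, hS, haS, hbS, hcS⟩ := hdisp
    rcases hS with (hS | hS) | hS
    · exact ⟨hab, S, hS, haS, hbS, hcS⟩
    · obtain ⟨x, rfl⟩ := hS
      rw [Set.mem_singleton_iff] at haS hbS
      exact absurd (haS.trans hbS.symm) hab
    · rw [Set.mem_singleton_iff] at hS
      subst hS
      exact absurd (Set.mem_univ c) hcS
  · intro htr V' T' hT'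
    exact hT' a b c htr
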